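/- arXiv:2205.13461 — 2 statements merged into one kernel-verified Lean document; each statement's English description precedes it below -/
import Mathlib

section
/- Let M_n be the minimum of n i.i.d. standard Gaussian random variables. Then for every constant c > 0 there exists N such that for all n ≥ N, Var(M_n) < c. In particular Var(M_n) → 0 as n → ∞. (Equivalently via symmetry, the variance of the maximum of n i.i.d. standard Gaussians tends to 0.) -/
open Real MeasureTheory ProbabilityTheory Filter Set
open scoped ENNReal NNReal Topology

section Aux

lemma pdf01 (x : ℝ) : gaussianPDFReal 0 1 x = (Real.sqrt (2*π))⁻¹ * Real.exp (-x^2/2) := by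
  simp [gaussianPDFReal_def]

lemma sqrt2pi_ge_one : (1:ℝ) ≤ Real.sqrt (2*π) := by
  rw [show (1:ℝ) = Real.sqrt 1 by simp]
  exact Real.sqrt_le_sqrt (by nlinarith [Real.pi_gt_three])

lemma pdf01_le (x : ℝ) : gaussianPDFReal 0 1 x ≤ Real.exp (-x^2/2) := by
  rw [pdf01]
  have h1 : (Real.sqrt (2*π))⁻¹ ≤ 1 := inv_le_one_of_one_le₀ sqrt2pi_ge_one
  nlinarith [Real.exp_pos (-x^2/2), (Real.exp_pos (-x^2/2)).le]

lemma setIntegral_gauss (f : ℝ → ℝ) {s : Set ℝ} (hs : MeasurableSet s) :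
    ∫ x in s, f x ∂(gaussianReal 0 1) = ∫ x in s, f x * gaussianPDFReal 0 1 x := by
  rw [gaussianReal_of_var_ne_zero _ one_ne_zero]
  rw [MeasureTheory.restrict_withDensity hs]
  have h : (gaussianPDF 0 1) = fun x => ((gaussianPDFReal 0 1 x).toNNReal : ℝ≥0∞) := by
    funext x; rw [gaussianPDF_def]; rfl
  rw [h, integral_withDensity_eq_integral_smul
    (measurable_gaussianPDFReal 0 1).real_toNNReal f]
  congr 1; funext x
  rw [NNReal.smul_def, Real.coe_toNNReal _ (gaussianPDFReal_nonneg 0 1 x),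
    smul_eq_mul, mul_comm]

lemma integrable_poly_exp (k : ℕ) :
    Integrable (fun x : ℝ => x^k * Real.exp (-x^2/2)) := by
  have h := integrable_rpow_mul_exp_neg_mul_sq (b := 1/2) one_half_pos (s := (k:ℝ))
    (lt_of_lt_of_le neg_one_lt_zero (Nat.cast_nonneg k))
  have heq : (fun x : ℝ => x ^ ((k:ℝ)) * Real.exp (-(1/2) * x^2))
      = fun x : ℝ => x^k * Real.exp (-x^2/2) := by
    funext x; rw [Real.rpow_natCast]; congr 1; ring
  rwa [heq] at h

lemma tendsto_poly_exp_atTop :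
    Tendsto (fun x : ℝ => (x^2+2)*Real.exp (-x^2/2)) atTop (𝓝 0) := by
  have h1 : Tendsto (fun x:ℝ => x^2*Real.exp (-x) + 2*Real.exp (-x)) atTop (𝓝 0) := by
    have ha := Real.tendsto_pow_mul_exp_neg_atTop_nhds_zero 2
    have h2 := Real.tendsto_exp_neg_atTop_nhds_zero.const_mul (2:ℝ)
    simpa using ha.add h2
  apply tendsto_of_tendsto_of_tendsto_of_le_of_le' tendsto_const_nhds h1
  · filter_upwards [eventually_ge_atTop (0:ℝ)] with x hx; positivity
  · filter_upwards [eventually_ge_atTop (2:ℝ)] with x hx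
    have h : Real.exp (-x^2/2) ≤ Real.exp (-x) := by
      apply Real.exp_le_exp.2; nlinarith
    nlinarith [Real.exp_pos (-x), Real.exp_pos (-x^2/2)]

lemma tendsto_poly_exp_atBot :
    Tendsto (fun x : ℝ => (x^2+2)*Real.exp (-x^2/2)) atBot (𝓝 0) := by
  have := tendsto_poly_exp_atTop.comp tendsto_neg_atBot_atTop
  refine this.congr fun x => ?_
  simp only [Function.comp]
  ring_nf

lemma hasDerivAt_aux (x : ℝ) :
    HasDerivAt (fun x : ℝ => -(x^2+2)*Real.exp (-x^2/2)) (x^3 * Real.exp (-x^2/2)) x := by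
  have h1 : HasDerivAt (fun x : ℝ => -x^2/2) (-x) x := by
    have := ((hasDerivAt_pow 2 x).neg).div_const 2
    simpa using this.congr_deriv (by ring)
  have h2 : HasDerivAt (fun x : ℝ => Real.exp (-x^2/2)) (Real.exp (-x^2/2) * (-x)) x :=
    (Real.hasDerivAt_exp _).comp x h1
  have h3 : HasDerivAt (fun x : ℝ => -(x^2+2)) (-(2*x)) x := by
    have := ((hasDerivAt_pow 2 x).add_const 2).neg
    exact this.congr_deriv (by norm_num)
  have := h3.mul h2
  exact this.congr_deriv (by ring)

lemma hasDerivAt_aux2 (x : ℝ) :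
    HasDerivAt (fun x : ℝ => (x^2+2)*Real.exp (-x^2/2)) (-(x^3 * Real.exp (-x^2/2))) x := by
  have h := (hasDerivAt_aux x).neg
  have he : (fun x : ℝ => -(-(x^2+2)*Real.exp (-x^2/2)))
      = fun x : ℝ => (x^2+2)*Real.exp (-x^2/2) := by funext y; ring
  rw [← he]; exact h

lemma tendsto_neg_poly_exp_atTop :
    Tendsto (fun x : ℝ => -(x^2+2)*Real.exp (-x^2/2)) atTop (𝓝 0) := by
  have h := tendsto_poly_exp_atTop.neg
  rw [neg_zero] at h
  exact h.congr fun x => by ring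

lemma integrable_sq_pdf : Integrable (fun x : ℝ => x^2 * gaussianPDFReal 0 1 x) := by
  apply (integrable_poly_exp 2).mono'
  · exact ((measurable_id.pow_const 2).mul
      (measurable_gaussianPDFReal 0 1)).aestronglyMeasurable
  · refine Eventually.of_forall fun x => ?_
    have h1 := gaussianPDFReal_nonneg 0 1 x
    have h2 := pdf01_le x
    rw [Real.norm_eq_abs, abs_of_nonneg (by positivity)]
    nlinarith [sq_nonneg x]

lemma gauss_tail_right {s : ℝ} (hs : 1 ≤ s) :
    ∫ x in Ioi s, x^2 ∂(gaussianReal 0 1) ≤ (s^2+2) * Real.exp (-s^2/2) := by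
  rw [setIntegral_gauss _ measurableSet_Ioi]
  have key : ∫ x in Ioi s, x^3 * Real.exp (-x^2/2) = (s^2+2) * Real.exp (-s^2/2) := by
    have h := integral_Ioi_of_hasDerivAt_of_tendsto'
      (f := fun x : ℝ => -(x^2+2)*Real.exp (-x^2/2))
      (f' := fun x : ℝ => x^3 * Real.exp (-x^2/2)) (a := s)
      (fun x _ => hasDerivAt_aux x) (integrable_poly_exp 3).integrableOn
      tendsto_neg_poly_exp_atTop
    rw [h]; ring
  rw [← key]
  apply setIntegral_mono_on integrable_sq_pdf.integrableOn
    (integrable_poly_exp 3).integrableOn measurableSet_Ioi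
  intro x hx
  have hx1 : 1 ≤ x := hs.trans (le_of_lt hx)
  have h2 := pdf01_le x
  have h1 := gaussianPDFReal_nonneg 0 1 x
  calc x^2 * gaussianPDFReal 0 1 x ≤ x^2 * Real.exp (-x^2/2) :=
        mul_le_mul_of_nonneg_left h2 (sq_nonneg x)
    _ ≤ x^3 * Real.exp (-x^2/2) :=
        mul_le_mul_of_nonneg_right (by nlinarith [sq_nonneg x]) (Real.exp_pos _).le

lemma gauss_tail_left {s : ℝ} (hs : 1 ≤ s) :
    ∫ x in Iio (-s), x^2 ∂(gaussianReal 0 1) ≤ (s^2+2) * Real.exp (-s^2/2) := by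
  rw [setIntegral_gauss _ measurableSet_Iio, ← integral_Iic_eq_integral_Iio]
  have key : ∫ x in Iic (-s), -(x^3 * Real.exp (-x^2/2)) = (s^2+2) * Real.exp (-s^2/2) := by
    have h := integral_Iic_of_hasDerivAt_of_tendsto'
      (f := fun x : ℝ => (x^2+2)*Real.exp (-x^2/2))
      (f' := fun x : ℝ => -(x^3 * Real.exp (-x^2/2))) (a := -s)
      (fun x _ => hasDerivAt_aux2 x)
      ((integrable_poly_exp 3).neg.integrableOn)
      tendsto_poly_exp_atBot
    rw [h, sub_zero]; ring_nf
  rw [← key]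
  apply setIntegral_mono_on integrable_sq_pdf.integrableOn
    (integrable_poly_exp 3).neg.integrableOn measurableSet_Iic
  intro x hx
  have hx1 : x ≤ -1 := le_trans hx (by linarith)
  have h2 := pdf01_le x
  have h1 := gaussianPDFReal_nonneg 0 1 x
  calc x^2 * gaussianPDFReal 0 1 x ≤ x^2 * Real.exp (-x^2/2) :=
        mul_le_mul_of_nonneg_left h2 (sq_nonneg x)
    _ ≤ -(x^3 * Real.exp (-x^2/2)) := by
        rw [← neg_mul]
        exact mul_le_mul_of_nonneg_right (by nlinarith [sq_nonneg x]) (Real.exp_pos _).le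

lemma gauss_Iic_lower {t δ : ℝ} (ht : 0 ≤ t) (hδ : 0 < δ) :
    δ * ((Real.sqrt (2*π))⁻¹ * Real.exp (-(t+δ)^2/2))
      ≤ ((gaussianReal 0 1) (Iic (-t))).toReal := by
  have happ := gaussianReal_apply_eq_integral 0 (v := 1) one_ne_zero (Iic (-t))
  have hInt : IntegrableOn (gaussianPDFReal 0 1) (Iic (-t)) :=
    (integrable_gaussianPDFReal 0 1).integrableOn
  have hnn : 0 ≤ ∫ x in Iic (-t), gaussianPDFReal 0 1 x :=
    setIntegral_nonneg measurableSet_Iic fun x _ => gaussianPDFReal_nonneg 0 1 x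
  have h3 : ((gaussianReal 0 1) (Iic (-t))).toReal = ∫ x in Iic (-t), gaussianPDFReal 0 1 x := by
    rw [happ, ENNReal.toReal_ofReal hnn]
  have h1 : ∫ x in Ioc (-t-δ) (-t), gaussianPDFReal 0 1 x
      ≤ ∫ x in Iic (-t), gaussianPDFReal 0 1 x := by
    apply setIntegral_mono_set hInt
      (Eventually.of_forall fun x => gaussianPDFReal_nonneg 0 1 x)
    exact HasSubset.Subset.eventuallyLE Ioc_subset_Iic_self
  have h2 : ((Real.sqrt (2*π))⁻¹ * Real.exp (-(t+δ)^2/2)) * ((volume (Ioc (-t-δ) (-t))).toReal)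
      ≤ ∫ x in Ioc (-t-δ) (-t), gaussianPDFReal 0 1 x := by
    apply setIntegral_ge_of_const_le_real measurableSet_Ioc measure_Ioc_lt_top.ne
    · intro x hx
      rw [pdf01]
      obtain ⟨ha, hb⟩ := hx
      have hx1 : x^2 ≤ (t+δ)^2 := by nlinarith
      have h := Real.exp_le_exp.2 (by linarith : -(t+δ)^2/2 ≤ -x^2/2)
      exact mul_le_mul_of_nonneg_left h (inv_nonneg.2 (Real.sqrt_nonneg (2*π)))
    · exact hInt.mono_set Ioc_subset_Iic_self
  have hvol : (volume (Ioc (-t-δ) (-t))).toReal = δ := by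
    rw [Real.volume_Ioc]; rw [ENNReal.toReal_ofReal (by linarith)]; ring
  rw [h3]
  calc δ * ((Real.sqrt (2*π))⁻¹ * Real.exp (-(t+δ)^2/2))
      = ((Real.sqrt (2*π))⁻¹ * Real.exp (-(t+δ)^2/2)) * ((volume (Ioc (-t-δ) (-t))).toReal) := by
        rw [hvol]; ring
    _ ≤ _ := le_trans h2 h1

lemma integrable_sq_gauss : Integrable (fun x : ℝ => x^2) (gaussianReal 0 1) := by
  rw [gaussianReal_of_var_ne_zero _ one_ne_zero,
    integrable_withDensity_iff (measurable_gaussianPDF 0 1)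
      (Eventually.of_forall fun x => ENNReal.ofReal_lt_top)]
  refine integrable_sq_pdf.congr (Eventually.of_forall fun x => ?_)
  simp only [gaussianPDF_def, ENNReal.toReal_ofReal (gaussianPDFReal_nonneg 0 1 x)]

lemma iInf_eq_min {n : ℕ} [NeZero n] (f : Fin n → ℝ) :
    ∃ j, (⨅ i, f i) = f j ∧ ∀ i, f j ≤ f i := by
  obtain ⟨j, hj⟩ := Finite.exists_min f
  exact ⟨j, le_antisymm (ciInf_le (Finite.bddBelow_range _) j) (le_ciInf hj), hj⟩

lemma min_gt_bound {Ω : Type*} [MeasurableSpace Ω] (P : Measure Ω) [IsProbabilityMeasure P]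
    {n : ℕ} (hn : 1 ≤ n) (X : Fin n → Ω → ℝ) (hmeas : ∀ i, Measurable (X i))
    (hindep : iIndepFun X P)
    (hlaw : ∀ i, Measure.map (X i) P = gaussianReal 0 1) (x : ℝ) :
    (P {ω | x < ⨅ i, X i ω}).toReal
      ≤ Real.exp (-(n:ℝ) * ((gaussianReal 0 1) (Iic x)).toReal) := by
  haveI : NeZero n := ⟨by omega⟩
  have hset : {ω | x < ⨅ i, X i ω} = ⋂ i, X i ⁻¹' (Ioi x) := by
    ext ω
    simp only [mem_setOf_eq, mem_iInter, mem_preimage, mem_Ioi]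
    constructor
    · intro h i; exact lt_of_lt_of_le h (ciInf_le (Finite.bddBelow_range _) i)
    · intro h
      obtain ⟨j, hj, _⟩ := iInf_eq_min (fun i => X i ω)
      rw [hj]; exact h j
  rw [hset, hindep.meas_iInter (fun i => ⟨Ioi x, measurableSet_Ioi, rfl⟩)]
  have hq : ∀ i : Fin n, P (X i ⁻¹' (Ioi x)) = (gaussianReal 0 1) (Ioi x) := fun i => by
    rw [← hlaw i, Measure.map_apply (hmeas i) measurableSet_Ioi]
  rw [Finset.prod_congr rfl (fun i _ => hq i), Finset.prod_const, Finset.card_univ,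
    Fintype.card_fin, ENNReal.toReal_pow]
  set p := ((gaussianReal 0 1) (Iic x)).toReal with hp
  have hp0 : 0 ≤ p := ENNReal.toReal_nonneg
  have hp1 : p ≤ 1 := by
    have h := prob_le_one (μ := gaussianReal 0 1) (s := Iic x)
    calc p ≤ (1 : ℝ≥0∞).toReal := ENNReal.toReal_mono ENNReal.one_ne_top h
      _ = 1 := by simp
  have h1 : ((gaussianReal 0 1) (Ioi x)).toReal = 1 - p := by
    have hc : (gaussianReal 0 1) (Ioi x) = 1 - (gaussianReal 0 1) (Iic x) := by
      rw [← compl_Iic, measure_compl measurableSet_Iic (measure_ne_top _ _), measure_univ]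
    rw [hc, ENNReal.toReal_sub_of_le (prob_le_one) ENNReal.one_ne_top, ENNReal.toReal_one]
  rw [h1]
  calc (1-p)^n ≤ (Real.exp (-p))^n :=
      pow_le_pow_left₀ (by linarith) (by linarith [Real.add_one_le_exp (-p)]) n
    _ = Real.exp (-(n:ℝ)*p) := by
      rw [← Real.exp_nat_mul]; ring_nf

lemma variance_le_shift {Ω : Type*} [MeasurableSpace Ω] (P : Measure Ω) [IsProbabilityMeasure P]
    {Y : Ω → ℝ} (hY : MemLp Y 2 P) (m : ℝ) :
    variance Y P ≤ ∫ ω, (Y ω + m)^2 ∂P := by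
  rw [variance_eq_sub hY]
  have hYi : Integrable Y P := hY.integrable one_le_two
  have hY2 : Integrable (fun ω => Y ω^2) P := hY.integrable_sq
  have hexp : ∫ ω, (Y ω + m)^2 ∂P = (∫ ω, Y ω^2 ∂P) + (2*m*(∫ ω, Y ω ∂P) + m^2) := by
    calc ∫ ω, (Y ω + m)^2 ∂P = ∫ ω, (Y ω^2 + ((2*m) * Y ω + m^2)) ∂P := by
          congr 1; funext ω; ring
      _ = (∫ ω, Y ω^2 ∂P) + ∫ ω, ((2*m) * Y ω + m^2) ∂P :=
          integral_add hY2 ((hYi.const_mul _).add (integrable_const _))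
      _ = (∫ ω, Y ω^2 ∂P) + (2*m*(∫ ω, Y ω ∂P) + m^2) := by
          rw [integral_add (hYi.const_mul _) (integrable_const _), integral_const_mul,
            integral_const]
          simp
  rw [hexp]
  have h := sq_nonneg ((∫ ω, Y ω ∂P) + m)
  have h2 : P[Y^2] = ∫ ω, Y ω^2 ∂P := by rfl
  have h3 : P[Y] = ∫ ω, Y ω ∂P := rfl
  nlinarith

lemma poly_exp_zero {a : ℝ} (ha : 0 < a) (k : ℕ) :
    Tendsto (fun l : ℝ => l^k * Real.exp (-(a*l))) atTop (𝓝 0) := by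
  have hmul : Tendsto (fun l : ℝ => a * l) atTop atTop :=
    Tendsto.const_mul_atTop ha tendsto_id
  have h := (Real.tendsto_pow_mul_exp_neg_atTop_nhds_zero k).comp hmul
  have h2 := h.const_mul ((a:ℝ)^k)⁻¹
  rw [mul_zero] at h2
  refine h2.congr fun l => ?_
  simp only [Function.comp]
  rw [mul_pow]
  field_simp

lemma exp_sq_bound {x : ℝ} (hx : 0 ≤ x) : x^2/4 ≤ Real.exp x := by
  have h := Real.add_one_le_exp (x/2)
  have h2 : Real.exp (x/2) * Real.exp (x/2) = Real.exp x := by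
    rw [← Real.exp_add]; ring_nf
  nlinarith [Real.exp_pos (x/2)]

lemma tendsto_sqrt_atTop : Tendsto Real.sqrt atTop atTop := by
  have h := tendsto_rpow_atTop (y := 1/2) (by norm_num)
  refine h.congr' ?_
  filter_upwards [eventually_ge_atTop (0:ℝ)] with x hx
  exact (Real.sqrt_eq_rpow x).symm

lemma G1_tendsto {ε : ℝ} (hε : 0 < ε) :
    Tendsto (fun l : ℝ => ((l+ε)^2+2) * Real.exp (-(ε*l))) atTop (𝓝 0) := by
  have h0 := poly_exp_zero hε 0
  have h1 := poly_exp_zero hε 1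
  have h2 := poly_exp_zero hε 2
  have := (h2.add ((h1.const_mul (2*ε)).add (h0.const_mul (ε^2+2))))
  simp only [add_zero, mul_zero] at this
  refine this.congr fun l => ?_
  ring

lemma G2_tendsto {ε c2 : ℝ} (hε : 0 < ε) (hc2 : 0 < c2) :
    Tendsto (fun l : ℝ => l^2 * Real.exp (-(c2 * Real.exp (ε * l / 2)))) atTop (𝓝 0) := by
  apply tendsto_of_tendsto_of_tendsto_of_le_of_le' tendsto_const_nhds (poly_exp_zero hε 2)
  · exact Eventually.of_forall fun l => by positivity
  · filter_upwards [eventually_ge_atTop (max 0 (16/(c2*ε)))] with l hl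
    have hl0 : 0 ≤ l := le_trans (le_max_left _ _) hl
    have hl1 : 16/(c2*ε) ≤ l := le_trans (le_max_right _ _) hl
    have key : ε * l ≤ c2 * Real.exp (ε * l / 2) := by
      have hb := exp_sq_bound (x := ε * l / 2) (by positivity)
      have heq : (ε*l/2)^2/4 = ε^2*l^2/16 := by ring
      rw [heq] at hb
      have h16 : 16 ≤ c2 * ε * l := by
        rw [div_le_iff₀ (by positivity)] at hl1; linarith
      have hc : c2 * (ε^2*l^2/16) ≤ c2 * Real.exp (ε*l/2) :=
        mul_le_mul_of_nonneg_left hb hc2.le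
      nlinarith [mul_le_mul_of_nonneg_right h16 (mul_nonneg hε.le hl0), hc]
    have := Real.exp_le_exp.2 (neg_le_neg key)
    exact mul_le_mul_of_nonneg_left this (sq_nonneg l)

end Aux

set_option maxHeartbeats 2000000 in
/-- The variance of the minimum of `n` i.i.d. standard Gaussians tends to `0`:
for every `c > 0` there exists `N` such that for all `n ≥ N`, `Var(min_i X n i) < c`. -/
theorem stmt_10 {Ω : Type*} [MeasurableSpace Ω] (P : Measure Ω) [IsProbabilityMeasure P]
    (X : (n : ℕ) → Fin n → Ω → ℝ)
    (hmeas : ∀ n i, Measurable (X n i))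
    (hindep : ∀ n, iIndepFun (X n) P)
    (hlaw : ∀ n i, Measure.map (X n i) P = gaussianReal 0 1) :
    ∀ c : ℝ, 0 < c → ∃ N : ℕ, ∀ n, N ≤ n →
      variance (fun ω => ⨅ i, X n i ω) P < c := by
  intro c hc
  obtain ⟨ε, hε0, hε1, hεc⟩ : ∃ ε : ℝ, 0 < ε ∧ ε ≤ 1 ∧ ε^2 ≤ c/2 := by
    refine ⟨min 1 (Real.sqrt (c/2)), lt_min one_pos (Real.sqrt_pos.2 (by linarith)),
      min_le_left _ _, ?_⟩
    calc (min 1 (Real.sqrt (c/2)))^2 ≤ (Real.sqrt (c/2))^2 :=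
          pow_le_pow_left₀ (le_min zero_le_one (Real.sqrt_nonneg _)) (min_le_right _ _) 2
      _ = c/2 := Real.sq_sqrt (by linarith)
  set c2 : ℝ := ε/2 * (Real.sqrt (2*π))⁻¹ * Real.exp (-ε^2/8) with hc2def
  have hsqrtpos : 0 < Real.sqrt (2*π) := lt_of_lt_of_le one_pos sqrt2pi_ge_one
  have hc2 : 0 < c2 := by positivity
  set L : ℕ → ℝ := fun n => Real.sqrt (2 * Real.log n) with hLdef
  set B : ℕ → ℝ := fun n => ε^2 + ((L n + ε)^2+2) * Real.exp (-(ε * L n))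
     + (L n)^2 * Real.exp (-(c2 * Real.exp (ε * L n / 2)))
     + 4*(L n)^2 * Real.exp (-((n:ℝ)/5))
     + 2*((L n)^2+2) * (n:ℝ)⁻¹ with hBdef
  have step1 : ∀ n, 8 ≤ n → variance (fun ω => ⨅ i, X n i ω) P ≤ B n := by
    intro n hn
    have hn1 : (1:ℕ) ≤ n := by omega
    haveI : NeZero n := ⟨by omega⟩
    have hnpos : (0:ℝ) < n := by exact_mod_cast (by omega : 0 < n)
    set Y : Ω → ℝ := fun ω => ⨅ i, X n i ω with hYdef
    have hYmeas : Measurable Y := Measurable.iInf (fun i => hmeas n i)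
    have hlog2 : 2 ≤ Real.log n := by
      have h8 : (8:ℝ) ≤ n := by exact_mod_cast hn
      have hexp2 : Real.exp 2 ≤ 8 := by
        have he := Real.exp_one_lt_d9
        have h2 : Real.exp 2 = Real.exp 1 * Real.exp 1 := by
          rw [← Real.exp_add]; norm_num
        nlinarith [Real.exp_pos 1]
      calc (2:ℝ) = Real.log (Real.exp 2) := (Real.log_exp 2).symm
        _ ≤ Real.log n := Real.log_le_log (Real.exp_pos 2) (le_trans hexp2 h8)
    have hlognn : (0:ℝ) ≤ Real.log n := by linarith
    have hLsq : (L n)^2 = 2 * Real.log n := Real.sq_sqrt (by linarith)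
    have hL2 : 2 ≤ L n := by
      have h4 : (2:ℝ) = Real.sqrt 4 := by
        rw [show (4:ℝ) = 2^2 by norm_num, Real.sqrt_sq (by norm_num : (0:ℝ) ≤ 2)]
      rw [h4, hLdef]
      exact Real.sqrt_le_sqrt (by linarith)
    have hL1 : 1 ≤ L n := by linarith
    have hLε : ε + 1 ≤ L n := by linarith
    have hexpL : Real.exp (-(L n)^2/2) = (n:ℝ)⁻¹ := by
      rw [hLsq, show -(2*Real.log n)/2 = -Real.log n by ring, Real.exp_neg,
        Real.exp_log hnpos]
    -- Memℒp facts
    have hXmem : ∀ i, MemLp (X n i) 2 P := fun i => by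
      have hid : MemLp (id : ℝ → ℝ) 2 (gaussianReal 0 1) := by
        rw [memLp_two_iff_integrable_sq aestronglyMeasurable_id]
        exact integrable_sq_gauss
      have h := (memLp_map_measure_iff (g := (id : ℝ → ℝ))
        (by rw [hlaw n i]; exact aestronglyMeasurable_id)
        (hmeas n i).aemeasurable).1 (by rw [hlaw n i]; exact hid)
      simpa using h
    have hXsq : ∀ i, Integrable (fun ω => (X n i ω)^2) P := fun i => (hXmem i).integrable_sq
    have hsumInt : Integrable (fun ω => ∑ i, (X n i ω)^2) P :=
      integrable_finset_sum _ (fun i _ => hXsq i)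
    have hYboundpt : ∀ ω, (Y ω)^2 ≤ ∑ i, (X n i ω)^2 := fun ω => by
      obtain ⟨j, hj, _⟩ := iInf_eq_min (fun i => X n i ω)
      show (⨅ i, X n i ω)^2 ≤ _
      rw [hj]
      exact Finset.single_le_sum (fun i _ => sq_nonneg (X n i ω)) (Finset.mem_univ j)
    have hYsq : Integrable (fun ω => Y ω^2) P := by
      apply hsumInt.mono' ((hYmeas.pow_const 2).aestronglyMeasurable)
      refine Eventually.of_forall fun ω => ?_
      rw [Real.norm_eq_abs, abs_of_nonneg (sq_nonneg _)]
      exact hYboundpt ω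
    have hYmem : MemLp Y 2 P := (memLp_two_iff_integrable_sq hYmeas.aestronglyMeasurable).2 hYsq
    have hYint : Integrable Y P := hYmem.integrable one_le_two
    -- pieces
    set i0 : Fin n := ⟨0, by omega⟩ with hi0def
    set s1 : ℝ := L n + ε with hs1def
    set g1 : ℝ → ℝ := (Iio (-s1)).indicator (fun x => x^2) with hg1def
    set g2 : ℝ → ℝ := (Ioi (L n)).indicator (fun x => x^2) with hg2def
    have hg1meas : Measurable g1 := (measurable_id.pow_const 2).indicator measurableSet_Iio
    have hg2meas : Measurable g2 := (measurable_id.pow_const 2).indicator measurableSet_Ioi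
    have hg1nonneg : ∀ x, 0 ≤ g1 x := fun x => indicator_nonneg (fun y _ => sq_nonneg y) x
    have hg2nonneg : ∀ x, 0 ≤ g2 x := fun x => indicator_nonneg (fun y _ => sq_nonneg y) x
    have hg1le : ∀ x, g1 x ≤ x^2 := fun x =>
      indicator_le_self' (fun y _ => sq_nonneg y) x
    have hg2le : ∀ x, g2 x ≤ x^2 := fun x =>
      indicator_le_self' (fun y _ => sq_nonneg y) x
    set A3 : Set Ω := {ω | ε - L n < ⨅ i, X n i ω} with hA3def
    set A4 : Set Ω := {ω | 0 < ⨅ i, X n i ω} with hA4def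
    have hA3meas : MeasurableSet A3 := measurableSet_lt measurable_const hYmeas
    have hA4meas : MeasurableSet A4 := measurableSet_lt measurable_const hYmeas
    set I3 : Ω → ℝ := A3.indicator (fun _ => (L n)^2) with hI3def
    set I4 : Ω → ℝ := A4.indicator (fun _ => 4*(L n)^2) with hI4def
    -- pointwise bound
    have hpt : ∀ ω, (Y ω + L n)^2
        ≤ ε^2 + (∑ i, g1 (X n i ω)) + I3 ω + I4 ω + 2 * g2 (X n i0 ω) := by
      intro ω
      have hg1s : 0 ≤ ∑ i, g1 (X n i ω) := Finset.sum_nonneg fun i _ => hg1nonneg _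
      have hI3nn : 0 ≤ I3 ω := indicator_nonneg (fun _ _ => sq_nonneg _) ω
      have hI4nn : 0 ≤ I4 ω := indicator_nonneg (fun _ _ => by positivity) ω
      have hg2nn : 0 ≤ g2 (X n i0 ω) := hg2nonneg _
      have hYle : ∀ i, Y ω ≤ X n i ω := fun i => ciInf_le (Finite.bddBelow_range _) i
      rcases lt_or_ge 0 (Y ω) with hy4 | hy4
      · have hI4v : I4 ω = 4*(L n)^2 := indicator_of_mem (show ω ∈ A4 from hy4) _
        rcases le_or_gt (Y ω) (L n) with hyl | hyl
        · have hb : (Y ω + L n)^2 ≤ 4*(L n)^2 := by nlinarith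
          rw [hI4v] at hI4nn ⊢
          linarith [sq_nonneg ε]
        · have h1 : Y ω ≤ X n i0 ω := hYle i0
          have hX0 : L n < X n i0 ω := lt_of_lt_of_le hyl h1
          have hg2v : g2 (X n i0 ω) = (X n i0 ω)^2 :=
            indicator_of_mem (show X n i0 ω ∈ Ioi (L n) from hX0) _
          have hb : (Y ω + L n)^2 ≤ 2*(X n i0 ω)^2 + 4*(L n)^2 := by
            nlinarith [sq_nonneg (Y ω - L n), mul_le_mul h1 h1 hy4.le (le_trans hy4.le h1)]
          rw [hI4v, hg2v]
          linarith [sq_nonneg ε]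
      · rcases lt_or_ge (ε - L n) (Y ω) with hy3 | hy3
        · have hI3v : I3 ω = (L n)^2 := indicator_of_mem (show ω ∈ A3 from hy3) _
          have hb : (Y ω + L n)^2 ≤ (L n)^2 := by nlinarith
          rw [hI3v]
          linarith [sq_nonneg ε]
        · rcases le_or_gt (-s1) (Y ω) with hy2 | hy2
          · have hb : (Y ω + L n)^2 ≤ ε^2 := by
              rw [hs1def] at hy2
              nlinarith
            linarith
          · obtain ⟨j, hj, _⟩ := iInf_eq_min (fun i => X n i ω)
            have hYj : Y ω = X n j ω := hj
            have hXj : X n j ω < -s1 := by rw [← hYj]; exact hy2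
            have hg1j : g1 (X n j ω) = (X n j ω)^2 :=
              indicator_of_mem (show X n j ω ∈ Iio (-s1) from hXj) _
            have hsum : (X n j ω)^2 ≤ ∑ i, g1 (X n i ω) := by
              rw [← hg1j]
              exact Finset.single_le_sum (f := fun i => g1 (X n i ω))
                (fun i _ => hg1nonneg _) (Finset.mem_univ j)
            have hb : (Y ω + L n)^2 ≤ (X n j ω)^2 := by
              rw [hYj] at hy2 ⊢
              rw [hs1def] at hy2
              nlinarith
            linarith [sq_nonneg ε]
    -- integrability of RHS pieces
    have hg1i : ∀ i, Integrable (fun ω => g1 (X n i ω)) P := fun i => by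
      apply (hXsq i).mono' ((hg1meas.comp (hmeas n i)).aestronglyMeasurable)
      refine Eventually.of_forall fun ω => ?_
      simp only [Function.comp_apply]
      rw [Real.norm_eq_abs, abs_of_nonneg (hg1nonneg _)]
      exact hg1le _
    have hg2i : Integrable (fun ω => g2 (X n i0 ω)) P := by
      apply (hXsq i0).mono' ((hg2meas.comp (hmeas n i0)).aestronglyMeasurable)
      refine Eventually.of_forall fun ω => ?_
      simp only [Function.comp_apply]
      rw [Real.norm_eq_abs, abs_of_nonneg (hg2nonneg _)]
      exact hg2le _
    have hsum' : Integrable (fun ω => ∑ i, g1 (X n i ω)) P :=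
      integrable_finset_sum _ (fun i _ => hg1i i)
    have hI3i : Integrable I3 P := (integrable_const _).indicator hA3meas
    have hI4i : Integrable I4 P := (integrable_const _).indicator hA4meas
    have hc0 : Integrable (fun _ : Ω => ε^2) P := integrable_const _
    have hf1 : Integrable (fun ω => ε^2 + (∑ i, g1 (X n i ω))) P := by exact hc0.add hsum'
    have hf2 : Integrable (fun ω => ε^2 + (∑ i, g1 (X n i ω)) + I3 ω) P := by
      exact hf1.add hI3i
    have hf3 : Integrable (fun ω => ε^2 + (∑ i, g1 (X n i ω)) + I3 ω + I4 ω) P := by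
      exact hf2.add hI4i
    have h2g2 : Integrable (fun ω => 2 * g2 (X n i0 ω)) P := by exact hg2i.const_mul 2
    have hRHSi : Integrable
        (fun ω => ε^2 + (∑ i, g1 (X n i ω)) + I3 ω + I4 ω + 2 * g2 (X n i0 ω)) P := by
      exact hf3.add h2g2
    have hLHSi : Integrable (fun ω => (Y ω + L n)^2) P := by
      have he : (fun ω => (Y ω + L n)^2)
          = fun ω => Y ω^2 + ((2*(L n)) * Y ω + (L n)^2) := by funext ω; ring
      rw [he]
      exact hYsq.add ((hYint.const_mul _).add (integrable_const _))
    -- main chain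
    have hvar := variance_le_shift P hYmem (L n)
    have hmono : ∫ ω, (Y ω + L n)^2 ∂P
        ≤ ∫ ω, (ε^2 + (∑ i, g1 (X n i ω)) + I3 ω + I4 ω + 2 * g2 (X n i0 ω)) ∂P :=
      integral_mono hLHSi hRHSi hpt
    have hsplit : ∫ ω, (ε^2 + (∑ i, g1 (X n i ω)) + I3 ω + I4 ω + 2 * g2 (X n i0 ω)) ∂P
        = ε^2 + (∑ i, ∫ ω, g1 (X n i ω) ∂P) + ∫ ω, I3 ω ∂P + ∫ ω, I4 ω ∂P
          + 2 * ∫ ω, g2 (X n i0 ω) ∂P := by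
      rw [integral_add hf3 h2g2, integral_add hf2 hI4i, integral_add hf1 hI3i,
        integral_add hc0 hsum',
        integral_const, integral_finset_sum _ (fun i _ => hg1i i), integral_const_mul]
      simp [measure_univ]
    -- term bounds
    have hmapg1 : ∀ i, ∫ ω, g1 (X n i ω) ∂P = ∫ x in Iio (-s1), x^2 ∂(gaussianReal 0 1) := by
      intro i
      calc ∫ ω, g1 (X n i ω) ∂P = ∫ x, g1 x ∂(Measure.map (X n i) P) :=
            (integral_map (hmeas n i).aemeasurable hg1meas.aestronglyMeasurable).symm
        _ = ∫ x, g1 x ∂(gaussianReal 0 1) := by rw [hlaw n i]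
        _ = ∫ x in Iio (-s1), x^2 ∂(gaussianReal 0 1) := integral_indicator measurableSet_Iio
    have hE2 : (∑ i, ∫ ω, g1 (X n i ω) ∂P) ≤ ((L n + ε)^2+2) * Real.exp (-(ε * L n)) := by
      have htail := gauss_tail_left (s := s1) (by rw [hs1def]; linarith)
      have hs1exp : Real.exp (-s1^2/2)
          = (n:ℝ)⁻¹ * Real.exp (-(ε * L n)) * Real.exp (-ε^2/2) := by
        rw [← hexpL, ← Real.exp_add, ← Real.exp_add]
        congr 1
        rw [hs1def]; ring
      calc (∑ i, ∫ ω, g1 (X n i ω) ∂P)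
          = (n:ℝ) * ∫ x in Iio (-s1), x^2 ∂(gaussianReal 0 1) := by
            rw [Finset.sum_congr rfl (fun i _ => hmapg1 i), Finset.sum_const,
              Finset.card_univ, Fintype.card_fin, nsmul_eq_mul]
        _ ≤ (n:ℝ) * ((s1^2+2) * Real.exp (-s1^2/2)) :=
            mul_le_mul_of_nonneg_left htail (by positivity)
        _ = ((s1^2+2) * Real.exp (-(ε * L n))) * (Real.exp (-ε^2/2)) * ((n:ℝ) * (n:ℝ)⁻¹) := by
            rw [hs1exp]; ring
        _ ≤ ((L n + ε)^2+2) * Real.exp (-(ε * L n)) := by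
            rw [mul_inv_cancel₀ hnpos.ne', mul_one, hs1def]
            have h1 : Real.exp (-ε^2/2) ≤ 1 := Real.exp_le_one_iff.2 (by nlinarith)
            have h2 : 0 ≤ ((L n + ε)^2+2) * Real.exp (-(ε * L n)) := by positivity
            nlinarith
    have hE3 : ∫ ω, I3 ω ∂P ≤ (L n)^2 * Real.exp (-(c2 * Real.exp (ε * L n / 2))) := by
      rw [hI3def, integral_indicator_const _ hA3meas, smul_eq_mul, mul_comm]
      have hb := min_gt_bound P hn1 (X n) (hmeas n) (hindep n) (hlaw n) (ε - L n)
      have hlb := gauss_Iic_lower (t := L n - ε) (by linarith) (δ := ε/2) (by positivity)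
      rw [show -(L n - ε) = ε - L n by ring] at hlb
      have hexp2 : Real.exp (-(L n - ε + ε/2)^2/2)
          = (n:ℝ)⁻¹ * Real.exp (ε * L n / 2) * Real.exp (-ε^2/8) := by
        rw [← hexpL, ← Real.exp_add, ← Real.exp_add]
        congr 1; ring
      rw [hexp2] at hlb
      have hnp : c2 * Real.exp (ε * L n / 2)
          ≤ (n:ℝ) * ((gaussianReal 0 1) (Iic (ε - L n))).toReal := by
        have := mul_le_mul_of_nonneg_left hlb hnpos.le
        calc c2 * Real.exp (ε * L n / 2)
            = (n:ℝ) * (ε/2 * ((Real.sqrt (2*π))⁻¹ *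
                ((n:ℝ)⁻¹ * Real.exp (ε * L n / 2) * Real.exp (-ε^2/8)))) := by
              rw [hc2def]
              field_simp
          _ ≤ (n:ℝ) * ((gaussianReal 0 1) (Iic (ε - L n))).toReal := this
      have hble : (P A3).toReal ≤ Real.exp (-(c2 * Real.exp (ε * L n / 2))) := by
        refine le_trans hb ?_
        apply Real.exp_le_exp.2
        rw [neg_mul]
        exact neg_le_neg hnp
      exact mul_le_mul_of_nonneg_left hble (sq_nonneg _)
    have hE4 : ∫ ω, I4 ω ∂P ≤ 4*(L n)^2 * Real.exp (-((n:ℝ)/5)) := by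
      rw [hI4def, integral_indicator_const _ hA4meas, smul_eq_mul, mul_comm]
      have hb := min_gt_bound P hn1 (X n) (hmeas n) (hindep n) (hlaw n) 0
      have hlb := gauss_Iic_lower (t := 0) le_rfl (δ := 1) one_pos
      rw [neg_zero] at hlb
      have hnum : (1:ℝ)/5 ≤ 1 * ((Real.sqrt (2*π))⁻¹ * Real.exp (-(0+1)^2/2)) := by
        rw [one_mul, show (-(0+1)^2/2 : ℝ) = -(1/2) by norm_num]
        have h1 : Real.sqrt (2*π) ≤ 5 * Real.exp (-(1/2) : ℝ) := by
          have hsq : (5 * Real.exp (-(1/2) : ℝ))^2 = 25 * Real.exp (-1) := by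
            rw [mul_pow, sq (Real.exp _), ← Real.exp_add]; norm_num
          rw [show (5:ℝ) * Real.exp (-(1/2)) =
            Real.sqrt ((5 * Real.exp (-(1/2) : ℝ))^2) from
            (Real.sqrt_sq (by positivity)).symm]
          apply Real.sqrt_le_sqrt
          rw [hsq, Real.exp_neg]
          have he1 : Real.exp 1 < 2.7182818286 := Real.exp_one_lt_d9
          have he0 : (0:ℝ) < Real.exp 1 := Real.exp_pos 1
          have hπ : π < 3.15 := Real.pi_lt_d2
          rw [← div_eq_mul_inv, le_div_iff₀ he0]
          nlinarith [Real.pi_pos, he0]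
        have hE : (0:ℝ) < Real.exp (-(1/2) : ℝ) := Real.exp_pos _
        have hinv : Real.sqrt (2*π) * (Real.sqrt (2*π))⁻¹ = 1 :=
          mul_inv_cancel₀ hsqrtpos.ne'
        nlinarith [mul_le_mul_of_nonneg_left h1 (inv_nonneg.2 hsqrtpos.le),
          mul_pos hsqrtpos hE]
      have hp5 : (1:ℝ)/5 ≤ ((gaussianReal 0 1) (Iic (0:ℝ))).toReal := le_trans hnum hlb
      have hble : (P A4).toReal ≤ Real.exp (-((n:ℝ)/5)) := by
        refine le_trans hb ?_
        apply Real.exp_le_exp.2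
        rw [neg_mul]
        apply neg_le_neg
        calc (n:ℝ)/5 = (n:ℝ) * (1/5) := by ring
          _ ≤ (n:ℝ) * ((gaussianReal 0 1) (Iic (0:ℝ))).toReal :=
            mul_le_mul_of_nonneg_left hp5 hnpos.le
      exact mul_le_mul_of_nonneg_left hble (by positivity)
    have hE5 : 2 * ∫ ω, g2 (X n i0 ω) ∂P ≤ 2*((L n)^2+2) * (n:ℝ)⁻¹ := by
      have hmapg2 : ∫ ω, g2 (X n i0 ω) ∂P = ∫ x in Ioi (L n), x^2 ∂(gaussianReal 0 1) := by
        calc ∫ ω, g2 (X n i0 ω) ∂P = ∫ x, g2 x ∂(Measure.map (X n i0) P) :=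
              (integral_map (hmeas n i0).aemeasurable hg2meas.aestronglyMeasurable).symm
          _ = ∫ x, g2 x ∂(gaussianReal 0 1) := by rw [hlaw n i0]
          _ = ∫ x in Ioi (L n), x^2 ∂(gaussianReal 0 1) := integral_indicator measurableSet_Ioi
      have htail := gauss_tail_right (s := L n) hL1
      rw [hmapg2]
      rw [hexpL] at htail
      calc 2 * ∫ x in Ioi (L n), x^2 ∂(gaussianReal 0 1)
          ≤ 2 * (((L n)^2+2) * (n:ℝ)⁻¹) := by linarith
        _ = 2*((L n)^2+2) * (n:ℝ)⁻¹ := by ring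
    -- conclude
    have hgoal : variance Y P ≤ B n := by
      rw [hBdef]
      refine le_trans hvar (le_trans hmono ?_)
      rw [hsplit]
      exact add_le_add (add_le_add (add_le_add (add_le_add le_rfl hE2) hE3) hE4) hE5
    exact hgoal
  have step2 : Tendsto B atTop (𝓝 (ε^2 + 0 + 0 + 0 + 0)) := by
    have hLtends : Tendsto L atTop atTop :=
      _root_.tendsto_sqrt_atTop.comp (Tendsto.const_mul_atTop two_pos
        (Real.tendsto_log_atTop.comp tendsto_natCast_atTop_atTop))
    have b1 : Tendsto (fun n : ℕ => ((L n + ε)^2+2) * Real.exp (-(ε * L n))) atTop (𝓝 0) :=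
      (G1_tendsto hε0).comp hLtends
    have b2 : Tendsto (fun n : ℕ => (L n)^2 * Real.exp (-(c2 * Real.exp (ε * L n / 2))))
        atTop (𝓝 0) := (G2_tendsto hε0 hc2).comp hLtends
    have b3 : Tendsto (fun n : ℕ => 4*(L n)^2 * Real.exp (-((n:ℝ)/5))) atTop (𝓝 0) := by
      have hup : Tendsto (fun n : ℕ => 8*((n:ℝ)^1 * Real.exp (-((1:ℝ)/5*(n:ℝ))))) atTop (𝓝 0) := by
        have := ((poly_exp_zero (a := (1:ℝ)/5) (by norm_num) 1).comp
          tendsto_natCast_atTop_atTop).const_mul (8:ℝ)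
        simpa using this
      apply tendsto_of_tendsto_of_tendsto_of_le_of_le' tendsto_const_nhds hup
      · exact Eventually.of_forall fun n => by positivity
      · filter_upwards [eventually_ge_atTop 1] with n hn
        have hn1 : (1:ℝ) ≤ n := by exact_mod_cast hn
        have hlog0 : 0 ≤ Real.log n := Real.log_nonneg hn1
        have hLsq : (L n)^2 = 2 * Real.log n := Real.sq_sqrt (by linarith)
        have hlogle : Real.log n ≤ (n:ℝ) :=
          le_trans (Real.log_le_sub_one_of_pos (by linarith)) (by linarith)
        have heq : -((1:ℝ)/5*(n:ℝ)) = -((n:ℝ)/5) := by ring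
        rw [heq]
        have := Real.exp_pos (-((n:ℝ)/5))
        rw [hLsq]
        nlinarith [this.le]
    have b4 : Tendsto (fun n : ℕ => 2*((L n)^2+2) * (n:ℝ)⁻¹) atTop (𝓝 0) := by
      have hld : Tendsto (fun x : ℝ => Real.log x / x) atTop (𝓝 0) :=
        Real.isLittleO_log_id_atTop.tendsto_div_nhds_zero
      have hld2 : Tendsto (fun n : ℕ => Real.log n / (n:ℝ)) atTop (𝓝 0) :=
        hld.comp tendsto_natCast_atTop_atTop
      have hinv : Tendsto (fun n : ℕ => ((n:ℝ))⁻¹) atTop (𝓝 0) :=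
        tendsto_inv_atTop_zero.comp tendsto_natCast_atTop_atTop
      have hsum := (hld2.const_mul (4:ℝ)).add (hinv.const_mul (4:ℝ))
      simp only [mul_zero, add_zero] at hsum
      apply hsum.congr'
      filter_upwards [eventually_ge_atTop 1] with n hn
      have hn1 : (1:ℝ) ≤ n := by exact_mod_cast hn
      have hLsq : (L n)^2 = 2 * Real.log n :=
        Real.sq_sqrt (by linarith [Real.log_nonneg hn1])
      rw [hLsq]
      field_simp
      ring
    have := (((tendsto_const_nhds (x := ε^2) (f := atTop)).add b1).add b2).add b3
    exact this.add b4
  have hlt : ε^2 + 0 + 0 + 0 + 0 < c := by simp only [add_zero]; linarith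
  have hev : ∀ᶠ n in atTop, B n < c := step2.eventually_lt_const hlt
  obtain ⟨N₁, hN₁⟩ := eventually_atTop.1 hev
  exact ⟨max 8 N₁, fun n hn => lt_of_le_of_lt (step1 n (le_trans (le_max_left _ _) hn))
    (hN₁ n (le_trans (le_max_right _ _) hn))⟩
end

section
/- Suppose the sender's posterior distribution over θ given samples x⃗ has density h_S(θ | x⃗) = ∏_i f(x_i - θ) / ∫ ∏_i f(x_i - t) dt, and g = f'/f satisfies |g'| ≤ c_1 everywhere. Then the posterior mean θ_S(x⃗) satisfies |∂θ_S(x⃗)/∂x_i| ≤ c_1 (Var_{posterior}(θ) + 2 θ_S(x⃗)²) for each coordinate i. -/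
open MeasureTheory

open Real Set

section aux
variable {f : ℝ → ℝ} {c₁ : ℝ}

private lemma aux_basic (hpos : ∀ x, 0 < f x) (hf : ContDiff ℝ 2 f) :
    Differentiable ℝ f ∧ Continuous (deriv f) ∧
      Differentiable ℝ (fun y => deriv f y / f y) := by
  have h2 : ContDiff ℝ ((1 : WithTop ℕ∞) + 1) f := by norm_num at hf ⊢; exact hf
  have hd := (contDiff_succ_iff_deriv.mp h2).2.2
  have hfd : Differentiable ℝ f := (contDiff_succ_iff_deriv.mp h2).1
  refine ⟨hfd, hd.continuous, ?_⟩
  exact (hd.differentiable one_ne_zero).div hfd (fun y => (hpos y).ne')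

private lemma aux_glip (hpos : ∀ x, 0 < f x) (hf : ContDiff ℝ 2 f)
    (hg : ∀ x, |deriv (fun y => deriv f y / f y) x| ≤ c₁) :
    ∀ u v, |deriv f u / f u - deriv f v / f v| ≤ c₁ * |u - v| := by
  intro u v
  have hgd := (aux_basic hpos hf).2.2
  have := Convex.norm_image_sub_le_of_norm_deriv_le
    (f := fun y => deriv f y / f y) (fun y _ => hgd y)
    (fun y _ => by simpa [Real.norm_eq_abs] using hg y) convex_univ (mem_univ v) (mem_univ u)
  simpa [Real.norm_eq_abs] using this
end aux

section aux2
variable {f : ℝ → ℝ} {c₁ : ℝ}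

private lemma aux_env (hpos : ∀ x, 0 < f x) (hf : ContDiff ℝ 2 f)
    (hg : ∀ x, |deriv (fun y => deriv f y / f y) x| ≤ c₁) (s₀ t : ℝ)
    {s : ℝ} (hs : s ∈ Metric.ball s₀ 1) :
    f (s - t) ≤ Real.exp (2 * c₁) * (f (s₀ - 1 - t) + f (s₀ + 1 - t)) := by
  have hc₁0 : 0 ≤ c₁ := (abs_nonneg _).trans (hg 0)
  have hs' : |s - s₀| < 1 := by simpa [Real.dist_eq] using hs
  rw [abs_lt] at hs'
  have has : s₀ - 1 < s := by linarith [hs'.1]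
  have hsb : s < s₀ + 1 := by linarith [hs'.2]
  have hφ : ∀ σ : ℝ, HasDerivAt (fun σ => Real.log (f (σ - t)))
      (deriv f (σ - t) / f (σ - t)) σ := by
    intro σ
    have h1 : HasDerivAt (fun σ : ℝ => σ - t) 1 σ := (hasDerivAt_id σ).sub_const t
    have h2 : HasDerivAt (fun σ => f (σ - t)) (deriv f (σ - t)) σ := by
      simpa [Function.comp_def] using (((aux_basic hpos hf).1 (σ - t)).hasDerivAt.comp σ h1)
    exact h2.log (hpos _).ne'
  have glip := aux_glip hpos hf hg
  have gb : ∀ c, c ∈ Ioo (s₀ - 1) (s₀ + 1) →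
      |deriv f (c - t) / f (c - t) - deriv f (s₀ - t) / f (s₀ - t)| ≤ c₁ := by
    intro c hc
    refine (glip _ _).trans ?_
    have h1 : |c - t - (s₀ - t)| ≤ 1 := by
      rw [show c - t - (s₀ - t) = c - s₀ by ring, abs_le]
      constructor <;> [linarith [hc.1]; linarith [hc.2]]
    nlinarith [abs_nonneg (c - t - (s₀ - t))]
  have key : ∃ z, (z = s₀ - 1 ∨ z = s₀ + 1) ∧
      Real.log (f (s - t)) ≤ Real.log (f (z - t)) + 2 * c₁ := by
    rcases le_or_gt (deriv f (s₀ - t) / f (s₀ - t)) 0 with hneg | hposg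
    · obtain ⟨c, hc, hslope⟩ := exists_hasDerivAt_eq_slope
        (fun σ => Real.log (f (σ - t))) (fun σ => deriv f (σ - t) / f (σ - t)) has
        (fun σ _ => (hφ σ).continuousAt.continuousWithinAt) (fun σ _ => hφ σ)
      refine ⟨s₀ - 1, Or.inl rfl, ?_⟩
      have hcc : c ∈ Ioo (s₀ - 1) (s₀ + 1) := ⟨hc.1, hc.2.trans hsb⟩
      have hgc : deriv f (c - t) / f (c - t) ≤ c₁ := by
        have := abs_le.mp (gb c hcc); linarith [this.2]
      have hEq : Real.log (f (s - t)) - Real.log (f (s₀ - 1 - t)) =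
          (s - (s₀ - 1)) * (deriv f (c - t) / f (c - t)) := by
        have hne : s - (s₀ - 1) ≠ 0 := sub_ne_zero.mpr has.ne'
        rw [hslope, mul_comm, div_mul_cancel₀ _ hne]
      nlinarith [hEq, hgc, has, hsb]
    · obtain ⟨c, hc, hslope⟩ := exists_hasDerivAt_eq_slope
        (fun σ => Real.log (f (σ - t))) (fun σ => deriv f (σ - t) / f (σ - t)) hsb
        (fun σ _ => (hφ σ).continuousAt.continuousWithinAt) (fun σ _ => hφ σ)
      refine ⟨s₀ + 1, Or.inr rfl, ?_⟩
      have hcc : c ∈ Ioo (s₀ - 1) (s₀ + 1) := ⟨has.trans hc.1, hc.2⟩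
      have hgc : -c₁ ≤ deriv f (c - t) / f (c - t) := by
        have := abs_le.mp (gb c hcc); linarith [this.1]
      have hEq : Real.log (f (s₀ + 1 - t)) - Real.log (f (s - t)) =
          ((s₀ + 1) - s) * (deriv f (c - t) / f (c - t)) := by
        have hne : s₀ + 1 - s ≠ 0 := sub_ne_zero.mpr hsb.ne'
        rw [hslope, mul_comm, div_mul_cancel₀ _ hne]
      nlinarith [hEq, hgc, has, hsb]
  obtain ⟨z, hz, hlog⟩ := key
  have h1 : f (s - t) ≤ Real.exp (2 * c₁) * f (z - t) := by
    have := Real.exp_le_exp.mpr hlog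
    rwa [Real.exp_log (hpos _), Real.exp_add, Real.exp_log (hpos _), mul_comm] at this
  rcases hz with rfl | rfl
  · refine h1.trans ?_
    have := (Real.exp_pos (2 * c₁)).le
    nlinarith [hpos (s₀ + 1 - t)]
  · refine h1.trans ?_
    nlinarith [hpos (s₀ - 1 - t), (Real.exp_pos (2 * c₁)).le]
end aux2

section aux3
variable {f : ℝ → ℝ} {c₁ : ℝ}

private lemma aux_key (hpos : ∀ x, 0 < f x) (hf : ContDiff ℝ 2 f)
    (hg : ∀ x, |deriv (fun y => deriv f y / f y) x| ≤ c₁)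
    (R : ℝ → ℝ) (hRc : Continuous R) (hRpos : ∀ t, 0 < R t)
    (hI : ∀ (s : ℝ) (k : ℕ), k ≤ 2 → Integrable (fun t : ℝ => t ^ k * (f (s - t) * R t)))
    (s₀ : ℝ) (k : ℕ) (hk : k ≤ 1) :
    Integrable (fun t : ℝ => t ^ k * (deriv f (s₀ - t) * R t)) ∧
    HasDerivAt (fun s => ∫ t : ℝ, t ^ k * (f (s - t) * R t))
      (∫ t : ℝ, t ^ k * (deriv f (s₀ - t) * R t)) s₀ := by
  obtain ⟨fd, f'c, -⟩ := aux_basic hpos hf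
  have glip := aux_glip hpos hf hg
  have hc₁0 : 0 ≤ c₁ := (abs_nonneg _).trans (hg 0)
  set A : ℝ := |deriv f s₀ / f s₀| + c₁ with hA
  have hA0 : 0 ≤ A := by positivity
  set E : ℝ := Real.exp (2 * c₁) with hE
  have hE0 : 0 ≤ E := (Real.exp_pos _).le
  set bound : ℝ → ℝ := fun t =>
    |t| ^ k * ((A + c₁ * |t|) * (E * ((f (s₀ - 1 - t) + f (s₀ + 1 - t)) * R t))) with hbd
  have contF : ∀ s : ℝ, Continuous (fun t : ℝ => t ^ k * (f (s - t) * R t)) := fun s =>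
    (continuous_pow k).mul ((hf.continuous.comp (continuous_const.sub continuous_id)).mul hRc)
  have contF' : Continuous (fun t : ℝ => t ^ k * (deriv f (s₀ - t) * R t)) :=
    (continuous_pow k).mul ((f'c.comp (continuous_const.sub continuous_id)).mul hRc)
  have W : ∀ (z : ℝ) (j : ℕ), j ≤ 2 → Integrable (fun t : ℝ => |t| ^ j * (f (z - t) * R t)) := by
    intro z j hj
    exact (hI z j hj).abs.congr (Filter.Eventually.of_forall fun t => by
      show |t ^ j * (f (z - t) * R t)| = _
      rw [abs_mul, abs_pow, abs_of_pos (mul_pos (hpos _) (hRpos t))])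
  have hk2 : k ≤ 2 := hk.trans one_le_two
  have hk12 : k + 1 ≤ 2 := by omega
  have bound_int : Integrable bound := by
    have S := ((((W (s₀ - 1) k hk2).const_mul (E * A)).add
      ((W (s₀ + 1) k hk2).const_mul (E * A))).add
      (((W (s₀ - 1) (k + 1) hk12).const_mul (E * c₁)).add
      ((W (s₀ + 1) (k + 1) hk12).const_mul (E * c₁))))
    exact S.congr (Filter.Eventually.of_forall fun t => by
      simp only [hbd, Pi.add_apply]; ring)
  refine hasDerivAt_integral_of_dominated_loc_of_deriv_le (s := Metric.ball s₀ 1)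
    (F' := fun s t => t ^ k * (deriv f (s - t) * R t)) (Metric.ball_mem_nhds s₀ one_pos)
    (Filter.Eventually.of_forall fun s => (contF s).aestronglyMeasurable)
    (hI s₀ k hk2) contF'.aestronglyMeasurable
    (Filter.Eventually.of_forall fun t => ?_) bound_int
    (Filter.Eventually.of_forall fun t => ?_)
  · intro s hs
    have e2 := aux_env hpos hf hg s₀ t hs
    have e1 : |deriv f (s - t)| ≤ (A + c₁ * |t|) * f (s - t) := by
      have h3 : |s - t - s₀| ≤ |t| + 1 := by
        have h4 : |s - s₀| ≤ 1 := le_of_lt (by simpa [Real.dist_eq] using hs)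
        calc |s - t - s₀| = |(s - s₀) + (-t)| := by ring_nf
          _ ≤ |s - s₀| + |(-t)| := abs_add_le _ _
          _ ≤ |t| + 1 := by rw [abs_neg]; linarith
      have h5 := glip (s - t) s₀
      have h6 : |deriv f (s - t) / f (s - t)| ≤ A + c₁ * |t| := by
        have h7 := abs_sub_abs_le_abs_sub (deriv f (s - t) / f (s - t)) (deriv f s₀ / f s₀)
        have h8 : c₁ * |s - t - s₀| ≤ c₁ * (|t| + 1) := by nlinarith
        rw [hA]; linarith
      calc |deriv f (s - t)| = |deriv f (s - t) / f (s - t)| * f (s - t) := by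
            rw [abs_div, abs_of_pos (hpos (s - t)), div_mul_cancel₀ _ (hpos (s - t)).ne']
        _ ≤ (A + c₁ * |t|) * f (s - t) := mul_le_mul_of_nonneg_right h6 (hpos _).le
    have hnorm : ‖t ^ k * (deriv f (s - t) * R t)‖ = |t| ^ k * (|deriv f (s - t)| * R t) := by
      rw [Real.norm_eq_abs, abs_mul, abs_pow, abs_mul, abs_of_pos (hRpos t)]
    rw [hnorm, hbd]
    have hB0 : 0 ≤ A + c₁ * |t| := by positivity
    calc |t| ^ k * (|deriv f (s - t)| * R t)
        ≤ |t| ^ k * (((A + c₁ * |t|) * f (s - t)) * R t) := by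
          gcongr
          exact (hRpos t).le
      _ = |t| ^ k * ((A + c₁ * |t|) * (f (s - t) * R t)) := by ring
      _ ≤ |t| ^ k * ((A + c₁ * |t|) * (E * ((f (s₀ - 1 - t) + f (s₀ + 1 - t)) * R t))) := by
          have : f (s - t) * R t ≤ E * ((f (s₀ - 1 - t) + f (s₀ + 1 - t)) * R t) := by
            rw [← mul_assoc]
            exact mul_le_mul_of_nonneg_right e2 (hRpos t).le
          gcongr
  · intro s hs
    have h1 : HasDerivAt (fun s => f (s - t)) (deriv f (s - t)) s := by
      simpa [Function.comp_def] using ((fd (s - t)).hasDerivAt.comp s ((hasDerivAt_id s).sub_const t))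
    exact (h1.mul_const (R t)).const_mul (t ^ k)
end aux3


/-- The sender's posterior mean `θS z = (∫ t, t ∏ᵢ f (z i - t)) / (∫ t, ∏ᵢ f (z i - t))`
(flat prior) has partial derivatives bounded by `c₁ (Var_posterior + 2 θS²)` whenever the
log-derivative `g = f' / f` of the density `f` has `|g'| ≤ c₁`. -/
theorem stmt_16 (f : ℝ → ℝ) (c₁ : ℝ) (hc₁ : 0 < c₁)
    (hpos : ∀ x, 0 < f x) (hf : ContDiff ℝ 2 f)
    (hg : ∀ x, |deriv (fun y => deriv f y / f y) x| ≤ c₁)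
    (n : ℕ) (x : Fin n → ℝ)
    (den num num2 : (Fin n → ℝ) → ℝ)
    (hden : ∀ z, den z = ∫ t : ℝ, ∏ i, f (z i - t))
    (hnum : ∀ z, num z = ∫ t : ℝ, t * ∏ i, f (z i - t))
    (hnum2 : ∀ z, num2 z = ∫ t : ℝ, t ^ 2 * ∏ i, f (z i - t))
    (hint : ∀ z : Fin n → ℝ,
      Integrable (fun t : ℝ => ∏ i, f (z i - t)) ∧
      Integrable (fun t : ℝ => t * ∏ i, f (z i - t)) ∧
      Integrable (fun t : ℝ => t ^ 2 * ∏ i, f (z i - t)))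
    (hden0 : ∀ z, den z ≠ 0)
    (θS V : (Fin n → ℝ) → ℝ)
    (hθS : ∀ z, θS z = num z / den z)
    (hV : ∀ z, V z = num2 z / den z - (θS z) ^ 2)
    (i : Fin n) (D : ℝ)
    (hD : HasDerivAt (fun s => θS (Function.update x i s)) D (x i)) :
    |D| ≤ c₁ * (V x + 2 * (θS x) ^ 2) := by
  classical
  have glip := aux_glip hpos hf hg
  set s₀ : ℝ := x i with hs₀
  set R : ℝ → ℝ := fun t => ∏ j ∈ Finset.univ.erase i, f (x j - t) with hRdef
  have hRc : Continuous R := by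
    apply continuous_finset_prod
    intro j _
    exact hf.continuous.comp (continuous_const.sub continuous_id)
  have hRpos : ∀ t, 0 < R t := fun t => Finset.prod_pos fun j _ => hpos _
  have hprod : ∀ s t : ℝ, (∏ j, f (Function.update x i s j - t)) = f (s - t) * R t := by
    intro s t
    rw [← Finset.mul_prod_erase Finset.univ _ (Finset.mem_univ i), Function.update_self]
    congr 1
    exact Finset.prod_congr rfl fun j hj => by
      rw [Function.update_of_ne (Finset.ne_of_mem_erase hj)]
  have hux : Function.update x i s₀ = x := Function.update_eq_self i x
  set Q : ℝ → ℝ := fun t => f (s₀ - t) * R t with hQdef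
  have hQ : ∀ t : ℝ, (∏ j, f (x j - t)) = Q t := by
    intro t
    have h := hprod s₀ t
    rwa [hux] at h
  have hQpos : ∀ t, 0 < Q t := fun t => mul_pos (hpos _) (hRpos t)
  have hI : ∀ (s : ℝ) (k : ℕ), k ≤ 2 →
      Integrable (fun t : ℝ => t ^ k * (f (s - t) * R t)) := by
    intro s k hk
    have h := hint (Function.update x i s)
    interval_cases k
    · simpa [hprod] using h.1
    · simpa [hprod] using h.2.1
    · simpa [hprod] using h.2.2
  obtain ⟨hInt0, hDer0⟩ := aux_key hpos hf hg R hRc hRpos hI s₀ 0 (by norm_num)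
  obtain ⟨hInt1, hDer1⟩ := aux_key hpos hf hg R hRc hRpos hI s₀ 1 le_rfl
  simp only [pow_zero, one_mul, pow_one] at hInt0 hDer0 hInt1 hDer1
  -- basic integrabilities in terms of Q
  have IQ : Integrable Q := by simpa using hI s₀ 0 (by norm_num)
  have ItQ : Integrable (fun t : ℝ => t * Q t) := by simpa using hI s₀ 1 one_le_two
  have It2Q : Integrable (fun t : ℝ => t ^ 2 * Q t) := by simpa using hI s₀ 2 le_rfl
  -- formulas for den/num/num2 at x
  have hdenQ : den x = ∫ t : ℝ, Q t := by rw [hden]; congr 1; funext t; exact hQ t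
  have hnumQ : num x = ∫ t : ℝ, t * Q t := by
    rw [hnum]; congr 1; funext t; rw [hQ t]
  have hnum2Q : num2 x = ∫ t : ℝ, t ^ 2 * Q t := by
    rw [hnum2]; congr 1; funext t; rw [hQ t]
  have dpos : 0 < den x := by
    have hle : (0:ℝ) ≤ den x := by
      rw [hdenQ]; exact integral_nonneg fun t => (hQpos t).le
    rcases lt_or_eq_of_le hle with h | h
    · exact h
    · exact absurd h.symm (hden0 x)
  set m : ℝ := θS x with hm
  have hnumm : num x = m * den x := by
    rw [hm, hθS, div_mul_cancel₀ _ (hden0 x)]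
  -- derivatives of s ↦ den (update x i s), num (update x i s)
  set Dn' : ℝ := ∫ t : ℝ, deriv f (s₀ - t) * R t with hDn'
  set N' : ℝ := ∫ t : ℝ, t * (deriv f (s₀ - t) * R t) with hN'
  have hdeq : (fun s => den (Function.update x i s)) = fun s => ∫ t : ℝ, f (s - t) * R t := by
    funext s; rw [hden]; congr 1; funext t; exact hprod s t
  have hneq : (fun s => num (Function.update x i s))
      = fun s => ∫ t : ℝ, t * (f (s - t) * R t) := by
    funext s; rw [hnum]; congr 1; funext t; rw [hprod s t]
  have hDden : HasDerivAt (fun s => den (Function.update x i s)) Dn' s₀ := by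
    rw [hdeq]; exact hDer0
  have hDnum : HasDerivAt (fun s => num (Function.update x i s)) N' s₀ := by
    rw [hneq]; exact hDer1
  have hDq : HasDerivAt (fun s => θS (Function.update x i s))
      ((N' * den x - num x * Dn') / den x ^ 2) s₀ := by
    have h := hDnum.div hDden (by rw [hux]; exact hden0 x)
    rw [hux] at h
    have heq : (fun s => θS (Function.update x i s))
        = fun s => num (Function.update x i s) / den (Function.update x i s) :=
      funext fun s => hθS _
    rw [heq]; exact h
  have hDeq : D = (N' * den x - num x * Dn') / den x ^ 2 := hD.unique hDq
  -- the covariance identity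
  set c : ℝ := deriv f (s₀ - m) / f (s₀ - m) with hc
  have hGQ : ∀ t : ℝ, deriv f (s₀ - t) / f (s₀ - t) * Q t = deriv f (s₀ - t) * R t := by
    intro t
    rw [hQdef, ← mul_assoc, div_mul_cancel₀ _ (hpos (s₀ - t)).ne']
  have hexp : ∀ t : ℝ, (t - m) * (deriv f (s₀ - t) / f (s₀ - t) - c) * Q t
      = t * (deriv f (s₀ - t) * R t) - m * (deriv f (s₀ - t) * R t)
        - (c * (t * Q t) - c * m * Q t) := by
    intro t
    linear_combination (t - m) * (hGQ t)
  have hkey : (∫ t : ℝ, (t - m) * (deriv f (s₀ - t) / f (s₀ - t) - c) * Q t)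
      = N' - m * Dn' := by
    have h1 : (∫ t : ℝ, (t - m) * (deriv f (s₀ - t) / f (s₀ - t) - c) * Q t)
        = ∫ t : ℝ, (t * (deriv f (s₀ - t) * R t) - m * (deriv f (s₀ - t) * R t)
          - (c * (t * Q t) - c * m * Q t)) := by
      congr 1; funext t; exact hexp t
    have ia : Integrable (fun t : ℝ => t * (deriv f (s₀ - t) * R t)
        - m * (deriv f (s₀ - t) * R t)) := hInt1.sub (hInt0.const_mul m)
    have ib : Integrable (fun t : ℝ => c * (t * Q t) - c * m * Q t) :=
      (ItQ.const_mul c).sub (IQ.const_mul (c * m))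
    have ic : Integrable (fun t : ℝ => m * (deriv f (s₀ - t) * R t)) := hInt0.const_mul m
    have id' : Integrable (fun t : ℝ => c * (t * Q t)) := ItQ.const_mul c
    have ie : Integrable (fun t : ℝ => c * m * Q t) := IQ.const_mul (c * m)
    rw [h1, integral_sub ia ib, integral_sub hInt1 ic, integral_sub id' ie,
      integral_const_mul, integral_const_mul, integral_const_mul]
    rw [← hnumQ, ← hdenQ, hnumm, ← hDn', ← hN']
    ring
  -- the bound
  have IntLHS : Integrable (fun t : ℝ => (t - m) * (deriv f (s₀ - t) / f (s₀ - t) - c) * Q t) := by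
    have h := (Integrable.sub hInt1 (hInt0.const_mul m)).sub
      ((ItQ.const_mul c).sub (IQ.const_mul (c * m)))
    exact h.congr (Filter.Eventually.of_forall fun t => by
      simp only [Pi.sub_apply]; rw [← hexp t])
  have I2 : Integrable (fun t : ℝ => c₁ * ((t - m) ^ 2 * Q t)) := by
    have h := ((It2Q.sub (ItQ.const_mul (2 * m))).add (IQ.const_mul (m ^ 2))).const_mul c₁
    exact h.congr (Filter.Eventually.of_forall fun t => by
      simp only [Pi.add_apply, Pi.sub_apply]; ring)
  have hpt : ∀ t : ℝ, |(t - m) * (deriv f (s₀ - t) / f (s₀ - t) - c) * Q t|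
      ≤ c₁ * ((t - m) ^ 2 * Q t) := by
    intro t
    rw [abs_mul, abs_mul, abs_of_pos (hQpos t)]
    have h1 := glip (s₀ - t) (s₀ - m)
    have h2 : |s₀ - t - (s₀ - m)| = |t - m| := by
      rw [show s₀ - t - (s₀ - m) = m - t by ring, abs_sub_comm]
    rw [h2] at h1
    calc |t - m| * |deriv f (s₀ - t) / f (s₀ - t) - c| * Q t
        ≤ |t - m| * (c₁ * |t - m|) * Q t := by
          gcongr
          exact (hQpos t).le
      _ = c₁ * ((t - m) ^ 2 * Q t) := by rw [← sq_abs (t - m)]; ring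
  have habs : |N' - m * Dn'| ≤ c₁ * (num2 x - m ^ 2 * den x) := by
    have h1 : |∫ t : ℝ, (t - m) * (deriv f (s₀ - t) / f (s₀ - t) - c) * Q t|
        ≤ ∫ t : ℝ, c₁ * ((t - m) ^ 2 * Q t) := by
      have hn := norm_integral_le_integral_norm
        (fun t : ℝ => (t - m) * (deriv f (s₀ - t) / f (s₀ - t) - c) * Q t) (μ := volume)
      simp only [Real.norm_eq_abs] at hn
      refine hn.trans ?_
      exact integral_mono IntLHS.abs I2 fun t => hpt t
    have h2 : (∫ t : ℝ, c₁ * ((t - m) ^ 2 * Q t)) = c₁ * (num2 x - m ^ 2 * den x) := by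
      have h3 : (fun t : ℝ => c₁ * ((t - m) ^ 2 * Q t))
          = fun t : ℝ => c₁ * (t ^ 2 * Q t) - c₁ * (2 * m) * (t * Q t) + c₁ * m ^ 2 * Q t := by
        funext t; ring
      have ia : Integrable (fun t : ℝ => c₁ * (t ^ 2 * Q t) - c₁ * (2 * m) * (t * Q t)) :=
        (It2Q.const_mul c₁).sub (ItQ.const_mul (c₁ * (2 * m)))
      have ib : Integrable (fun t : ℝ => c₁ * m ^ 2 * Q t) := IQ.const_mul (c₁ * m ^ 2)
      have ic : Integrable (fun t : ℝ => c₁ * (t ^ 2 * Q t)) := It2Q.const_mul c₁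
      have id' : Integrable (fun t : ℝ => c₁ * (2 * m) * (t * Q t)) := ItQ.const_mul (c₁ * (2 * m))
      rw [h3, integral_add ia ib, integral_sub ic id',
        integral_const_mul, integral_const_mul, integral_const_mul,
        ← hnum2Q, ← hnumQ, ← hdenQ, hnumm]
      ring
    rw [hkey, h2] at h1
    exact h1
  have hDval : D = (N' - m * Dn') / den x := by
    rw [hDeq, hnumm]
    field_simp
  have hfinal : |D| ≤ c₁ * (num2 x - m ^ 2 * den x) / den x := by
    rw [hDval, abs_div, abs_of_pos dpos]
    exact (div_le_div_iff_of_pos_right dpos).mpr habs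
  have heq2 : c₁ * (num2 x - m ^ 2 * den x) / den x = c₁ * (num2 x / den x - m ^ 2) := by
    rw [div_eq_iff dpos.ne']
    linear_combination (-c₁) * (div_mul_cancel₀ (num2 x) dpos.ne')
  rw [hV]
  rw [heq2] at hfinal
  have hmm : 0 ≤ c₁ * m ^ 2 := by positivity
  linarith
end
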